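/- Let n ≥ 1, let w_0 ∈ S_n be the longest permutation (i ↦ n+1−i), and let v ∈ S_n. For every polynomial f ∈ ℚ[x_1,…,x_n], one has ∂_{w_0 v w_0}(w_0·f) = (−1)^{ℓ(v)} · w_0·(∂_v f), where w_0·g denotes the polynomial g with variables permuted by w_0. Equivalently, conjugating the operator (−1)^{ℓ(v)}∂_v by the action of w_0 yields ∂_{w_0 v w_0}. -/

import Mathlib

open MvPolynomial
open scoped Classical

/-- The Coxeter length of a permutation of `Fin n`, i.e. its number of inversions. -/
def permLen {n : ℕ} (w : Equiv.Perm (Fin n)) : ℕ :=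
  (Finset.univ.filter (fun p : Fin n × Fin n => p.1 < p.2 ∧ w p.2 < w p.1)).card

/-- The adjacent transposition `s_i` exchanging the `i`-th and `(i+1)`-th letters
(zero-indexed); junk value `1` if out of range. -/
def adjSwap (n : ℕ) (i : ℕ) : Equiv.Perm (Fin n) :=
  if h : i + 1 < n then Equiv.swap ⟨i, Nat.lt_of_succ_lt h⟩ ⟨i + 1, h⟩ else 1

/-- The longest element `w₀` of the symmetric group on `Fin n`, `i ↦ n - 1 - i`
(one-indexed: `i ↦ n + 1 - i`). -/
def w0 (n : ℕ) : Equiv.Perm (Fin n) := Fin.revPerm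

/-- The Demazure (divided difference) operator with respect to a pair of variables `i j`:
`f ↦ (f - swap(i,j)·f) / (Xᵢ - Xⱼ)`.  The difference is always divisible by `Xᵢ - Xⱼ`
(for `i ≠ j`), and the quotient is unique since the polynomial ring is a domain, so the
definition by choice below produces exactly this quotient. -/
noncomputable def demazure {σ : Type} [DecidableEq σ] (i j : σ)
    (f : MvPolynomial σ ℚ) : MvPolynomial σ ℚ :=
  if h : ∃ g, f - rename (Equiv.swap i j) f = (X i - X j) * g then h.choose else 0

/-- The Demazure operator `∂ᵢ` on `ℚ[x₀, …, x_{n-1}]` (zero-indexed). -/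
noncomputable def demAt (n : ℕ) (i : ℕ) :
    MvPolynomial (Fin n) ℚ → MvPolynomial (Fin n) ℚ :=
  if h : i + 1 < n then demazure ⟨i, Nat.lt_of_succ_lt h⟩ ⟨i + 1, h⟩ else fun _ => 0

/-- The composite Demazure operator `∂_{i₁} ∘ ⋯ ∘ ∂_{i_r}` along a word `l = [i₁, …, i_r]`. -/
noncomputable def demWord (n : ℕ) (l : List ℕ) :
    MvPolynomial (Fin n) ℚ → MvPolynomial (Fin n) ℚ :=
  l.foldr (fun i op => demAt n i ∘ op) id

/-- `l = [i₁, …, i_r]` is a reduced word for `w` if all letters are in range,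
`s_{i₁} ⋯ s_{i_r} = w`, and `r = ℓ(w)` is the number of inversions of `w`. -/
def IsReducedWord (n : ℕ) (w : Equiv.Perm (Fin n)) (l : List ℕ) : Prop :=
  (∀ i ∈ l, i + 1 < n) ∧ (l.map (adjSwap n)).prod = w ∧ l.length = permLen w

/-- The Demazure operator `∂_w`, defined along a chosen reduced word of `w`
(the result is independent of this choice). -/
noncomputable def demazureOf (n : ℕ) (w : Equiv.Perm (Fin n)) :
    MvPolynomial (Fin n) ℚ → MvPolynomial (Fin n) ℚ :=
  if h : ∃ l, IsReducedWord n w l then demWord n h.choose else fun _ => 0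

/-- The Demazure operator `∂ᵢˣ` acting on the `x`-variables (the left summand) of
`ℚ[x₁, …, xₙ, t₁, …, tₙ]`. -/
noncomputable def demAtX (n : ℕ) (i : ℕ) :
    MvPolynomial (Fin n ⊕ Fin n) ℚ → MvPolynomial (Fin n ⊕ Fin n) ℚ :=
  if h : i + 1 < n then
    demazure (Sum.inl ⟨i, Nat.lt_of_succ_lt h⟩) (Sum.inl ⟨i + 1, h⟩) else fun _ => 0

/-- Composite of `x`-variable Demazure operators along a word. -/
noncomputable def demWordX (n : ℕ) (l : List ℕ) :
    MvPolynomial (Fin n ⊕ Fin n) ℚ → MvPolynomial (Fin n ⊕ Fin n) ℚ :=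
  l.foldr (fun i op => demAtX n i ∘ op) id

/-- The Demazure operator `∂_wˣ` in the `x`-variables, along a chosen reduced word of `w`. -/
noncomputable def demazureOfX (n : ℕ) (w : Equiv.Perm (Fin n)) :
    MvPolynomial (Fin n ⊕ Fin n) ℚ → MvPolynomial (Fin n ⊕ Fin n) ℚ :=
  if h : ∃ l, IsReducedWord n w l then demWordX n h.choose else fun _ => 0

/-- The top product `∏_{i + j ≤ n} (xᵢ - tⱼ)` (one-indexed), i.e. the double Schubert
polynomial of the longest element. -/
noncomputable def schubProd (n : ℕ) : MvPolynomial (Fin n ⊕ Fin n) ℚ :=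
  ∏ p ∈ Finset.univ.filter (fun p : Fin n × Fin n => (p.1 : ℕ) + (p.2 : ℕ) + 2 ≤ n),
    (X (Sum.inl p.1) - X (Sum.inr p.2))

/-- The double Schubert polynomial `𝔖_w(x, t) = ∂ˣ_{w⁻¹w₀} (∏_{i+j≤n} (xᵢ - tⱼ))`. -/
noncomputable def schubert (n : ℕ) (w : Equiv.Perm (Fin n)) :
    MvPolynomial (Fin n ⊕ Fin n) ℚ :=
  demazureOfX n (w⁻¹ * w0 n) (schubProd n)



variable {σ : Type} [DecidableEq σ]

lemma demazure_exists (i j : σ) (f : MvPolynomial σ ℚ) :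
    ∃ g, f - rename (Equiv.swap i j) f = (X i - X j) * g := by
  induction f using MvPolynomial.induction_on with
  | C a => exact ⟨0, by simp⟩
  | add p q hp hq =>
    obtain ⟨g, hg⟩ := hp; obtain ⟨g', hg'⟩ := hq
    exact ⟨g + g', by rw [map_add]; ring_nf; linear_combination hg + hg'⟩
  | mul_X p k hp =>
    obtain ⟨g, hg⟩ := hp
    by_cases hk : k = i
    · subst hk
      refine ⟨g * X k + rename (Equiv.swap k j) p, ?_⟩
      rw [map_mul, rename_X, Equiv.swap_apply_left]
      linear_combination (X k : MvPolynomial σ ℚ) * hg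
    · by_cases hk' : k = j
      · subst hk'
        refine ⟨g * X k - rename (Equiv.swap i k) p, ?_⟩
        rw [map_mul, rename_X, Equiv.swap_apply_right]
        linear_combination (X k : MvPolynomial σ ℚ) * hg
      · refine ⟨g * X k, ?_⟩
        rw [map_mul, rename_X, Equiv.swap_apply_of_ne_of_ne hk hk']
        linear_combination (X k : MvPolynomial σ ℚ) * hg

lemma demazure_spec (i j : σ) (f : MvPolynomial σ ℚ) :
    (X i - X j) * demazure i j f = f - rename (Equiv.swap i j) f := by
  rw [demazure, dif_pos (demazure_exists i j f)]
  exact (demazure_exists i j f).choose_spec.symm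

lemma X_sub_X_ne_zero {i j : σ} (hij : i ≠ j) : (X i - X j : MvPolynomial σ ℚ) ≠ 0 :=
  sub_ne_zero.mpr (fun h => hij (MvPolynomial.X_injective h))

lemma demazure_unique {i j : σ} (hij : i ≠ j) {f g : MvPolynomial σ ℚ}
    (h : (X i - X j) * g = f - rename (Equiv.swap i j) f) : demazure i j f = g :=
  mul_left_cancel₀ (X_sub_X_ne_zero hij) (by rw [demazure_spec, h])

lemma rename_demazure (π : Equiv.Perm σ) {i j : σ} (hij : i ≠ j) (f : MvPolynomial σ ℚ) :
    rename π (demazure i j f) = demazure (π i) (π j) (rename π f) := by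
  refine (demazure_unique (fun h => hij (π.injective h)) ?_).symm
  have h1 : (X (π i) - X (π j) : MvPolynomial σ ℚ) = rename π (X i - X j) := by
    rw [map_sub, rename_X, rename_X]
  rw [h1, ← map_mul, demazure_spec, map_sub, rename_rename, rename_rename]
  congr 2
  ext x
  simp [Function.comp, Equiv.swap_apply_def]
  split_ifs with h1 h2 h3 h4 h5 h6 <;>
    simp_all [π.injective.eq_iff] <;> aesop

lemma demazure_smul (i j : σ) (c : ℚ) (hij : i ≠ j) (f : MvPolynomial σ ℚ) :
    demazure i j (c • f) = c • demazure i j f := by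
  refine demazure_unique hij ?_
  rw [map_smul, mul_smul_comm, demazure_spec, smul_sub]

lemma demazure_neg (i j : σ) (hij : i ≠ j) (f : MvPolynomial σ ℚ) :
    demazure i j (-f) = - demazure i j f := by
  have := demazure_smul i j (-1) hij f
  simpa using this

lemma demazure_antisymm (i j : σ) (hij : i ≠ j) (f : MvPolynomial σ ℚ) :
    demazure j i f = - demazure i j f := by
  refine demazure_unique hij.symm ?_
  rw [Equiv.swap_comm j i, mul_neg, ← neg_mul, neg_sub, demazure_spec]

lemma swap3_left {a b c : σ} (hab : a ≠ b) (hac : a ≠ c) (hbc : b ≠ c) :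
    Equiv.swap b c * (Equiv.swap a c * Equiv.swap a b) = Equiv.swap a c := by
  ext x
  rcases eq_or_ne x a with rfl | hxa
  · simp [Equiv.swap_apply_of_ne_of_ne, hab, hac, hbc, hab.symm, hac.symm, hbc.symm]
  rcases eq_or_ne x b with rfl | hxb
  · simp [Equiv.swap_apply_of_ne_of_ne, hab, hac, hbc, hab.symm, hac.symm, hbc.symm]
  rcases eq_or_ne x c with rfl | hxc
  · simp [Equiv.swap_apply_of_ne_of_ne, hab, hac, hbc, hab.symm, hac.symm, hbc.symm]
  · simp [Equiv.swap_apply_of_ne_of_ne, hxa, hxb, hxc]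

lemma swap3_right {a b c : σ} (hab : a ≠ b) (hac : a ≠ c) (hbc : b ≠ c) :
    Equiv.swap a b * (Equiv.swap a c * Equiv.swap b c) = Equiv.swap a c := by
  ext x
  rcases eq_or_ne x a with rfl | hxa
  · simp [Equiv.swap_apply_of_ne_of_ne, hab, hac, hbc, hab.symm, hac.symm, hbc.symm]
  rcases eq_or_ne x b with rfl | hxb
  · simp [Equiv.swap_apply_of_ne_of_ne, hab, hac, hbc, hab.symm, hac.symm, hbc.symm]
  rcases eq_or_ne x c with rfl | hxc
  · simp [Equiv.swap_apply_of_ne_of_ne, hab, hac, hbc, hab.symm, hac.symm, hbc.symm]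
  · simp [Equiv.swap_apply_of_ne_of_ne, hxa, hxb, hxc]

lemma swap_disj_comm {a b c d : σ} (hac : a ≠ c) (had : a ≠ d) (hbc : b ≠ c) (hbd : b ≠ d) :
    Equiv.swap c d * Equiv.swap a b = Equiv.swap a b * Equiv.swap c d := by
  ext x
  rcases eq_or_ne x a with rfl | hxa
  · simp [Equiv.swap_apply_of_ne_of_ne, *]
  rcases eq_or_ne x b with rfl | hxb
  · simp [Equiv.swap_apply_of_ne_of_ne, *, Ne.symm]
  rcases eq_or_ne x c with rfl | hxc
  · simp [Equiv.swap_apply_of_ne_of_ne, *, Ne.symm]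
  rcases eq_or_ne x d with rfl | hxd
  · simp [Equiv.swap_apply_of_ne_of_ne, *, Ne.symm]
  · simp [Equiv.swap_apply_of_ne_of_ne, *]

lemma rename_perm_mul (π τ : Equiv.Perm σ) (f : MvPolynomial σ ℚ) :
    rename π (rename τ f) = rename (π * τ) f := by
  rw [rename_rename]; rfl

/-- Commutation relation for disjoint Demazure operators. -/
lemma demazure_comm {a b c d : σ} (hab : a ≠ b) (hcd : c ≠ d)
    (hac : a ≠ c) (had : a ≠ d) (hbc : b ≠ c) (hbd : b ≠ d) (f : MvPolynomial σ ℚ) :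
    demazure a b (demazure c d f) = demazure c d (demazure a b f) := by
  have hN : (X a - X b) * (X c - X d) ≠ (0 : MvPolynomial σ ℚ) :=
    mul_ne_zero (X_sub_X_ne_zero hab) (X_sub_X_ne_zero hcd)
  apply mul_left_cancel₀ hN
  have t1 : (X a - X b) * demazure a b (demazure c d f) =
      demazure c d f - demazure c d (rename (Equiv.swap a b) f) := by
    rw [demazure_spec, rename_demazure _ hcd,
      Equiv.swap_apply_of_ne_of_ne hac.symm hbc.symm,
      Equiv.swap_apply_of_ne_of_ne had.symm hbd.symm]
  have t1' : (X c - X d) * demazure c d (demazure a b f) =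
      demazure a b f - demazure a b (rename (Equiv.swap c d) f) := by
    rw [demazure_spec, rename_demazure _ hab,
      Equiv.swap_apply_of_ne_of_ne hac had, Equiv.swap_apply_of_ne_of_ne hbc hbd]
  have t2 := demazure_spec c d f
  have t3 := demazure_spec c d (rename (Equiv.swap a b) f)
  have t2' := demazure_spec a b f
  have t3' := demazure_spec a b (rename (Equiv.swap c d) f)
  rw [rename_perm_mul] at t3 t3'
  rw [swap_disj_comm hac had hbc hbd] at t3
  linear_combination (X c - X d) * t1 + t2 - t3 - (X a - X b) * t1' - t2' + t3'

lemma rename_perm_one (f : MvPolynomial σ ℚ) : rename (⇑(1 : Equiv.Perm σ)) f = f := by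
  simp

/-- Braid relation for Demazure operators. -/
lemma demazure_braid {a b c : σ} (hab : a ≠ b) (hac : a ≠ c) (hbc : b ≠ c)
    (f : MvPolynomial σ ℚ) :
    demazure a b (demazure b c (demazure a b f)) =
      demazure b c (demazure a b (demazure b c f)) := by
  set A : MvPolynomial σ ℚ := X a - X b with hA
  set B : MvPolynomial σ ℚ := X b - X c with hB
  set C : MvPolynomial σ ℚ := X a - X c with hC
  have ha : A ≠ 0 := X_sub_X_ne_zero hab
  have hb : B ≠ 0 := X_sub_X_ne_zero hbc
  have hc : C ≠ 0 := X_sub_X_ne_zero hac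
  have hN : A * A * B * B * C * C ≠ (0 : MvPolynomial σ ℚ) :=
    mul_ne_zero (mul_ne_zero (mul_ne_zero (mul_ne_zero (mul_ne_zero ha ha) hb) hb) hc) hc
  apply mul_left_cancel₀ hN
  -- left side
  have s1 : A * demazure a b f = f - rename (Equiv.swap a b) f := demazure_spec a b f
  have e2 : rename (Equiv.swap b c) (demazure a b f)
      = demazure a c (rename (Equiv.swap b c) f) := by
    rw [rename_demazure _ hab, Equiv.swap_apply_of_ne_of_ne hab hac, Equiv.swap_apply_left]
  have s2 : B * demazure b c (demazure a b f) =
      demazure a b f - demazure a c (rename (Equiv.swap b c) f) := by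
    rw [hB, demazure_spec, e2]
  have s4 : C * demazure a c (rename (Equiv.swap b c) f) =
      rename (Equiv.swap b c) f - rename (⇑(Equiv.swap a c * Equiv.swap b c)) f := by
    rw [hC, demazure_spec, rename_perm_mul]
  have e3 : rename (Equiv.swap a b) (demazure b c (demazure a b f)) =
      - demazure a c (demazure a b (rename (Equiv.swap a b) f)) := by
    rw [rename_demazure (Equiv.swap a b) hbc, Equiv.swap_apply_right,
      Equiv.swap_apply_of_ne_of_ne hac.symm hbc.symm,
      rename_demazure (Equiv.swap a b) hab, Equiv.swap_apply_left, Equiv.swap_apply_right,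
      demazure_antisymm a b hab, demazure_neg _ _ hac]
  have s3 : A * demazure a b (demazure b c (demazure a b f)) =
      demazure b c (demazure a b f) + demazure a c (demazure a b (rename (Equiv.swap a b) f)) := by
    rw [hA, demazure_spec, e3]; ring
  have s5 : A * demazure a b (rename (Equiv.swap a b) f) = rename (Equiv.swap a b) f - f := by
    rw [hA, demazure_spec, rename_perm_mul, Equiv.swap_mul_self, rename_perm_one]
  have e6 : rename (Equiv.swap a c) (demazure a b (rename (Equiv.swap a b) f)) =
      - demazure b c (rename (⇑(Equiv.swap a c * Equiv.swap a b)) f) := by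
    rw [rename_demazure (Equiv.swap a c) hab, Equiv.swap_apply_left,
      Equiv.swap_apply_of_ne_of_ne hab.symm hbc, rename_perm_mul,
      demazure_antisymm b c hbc]
  have s6 : C * demazure a c (demazure a b (rename (Equiv.swap a b) f)) =
      demazure a b (rename (Equiv.swap a b) f)
        + demazure b c (rename (⇑(Equiv.swap a c * Equiv.swap a b)) f) := by
    rw [hC, demazure_spec, e6]; ring
  have s7 : B * demazure b c (rename (⇑(Equiv.swap a c * Equiv.swap a b)) f) =
      rename (⇑(Equiv.swap a c * Equiv.swap a b)) f - rename (Equiv.swap a c) f := by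
    rw [hB, demazure_spec, rename_perm_mul, swap3_left hab hac hbc]
  -- right side
  have s1' : B * demazure b c f = f - rename (Equiv.swap b c) f := demazure_spec b c f
  have e2' : rename (Equiv.swap a b) (demazure b c f)
      = demazure a c (rename (Equiv.swap a b) f) := by
    rw [rename_demazure _ hbc, Equiv.swap_apply_right,
      Equiv.swap_apply_of_ne_of_ne hac.symm hbc.symm]
  have s2' : A * demazure a b (demazure b c f) =
      demazure b c f - demazure a c (rename (Equiv.swap a b) f) := by
    rw [hA, demazure_spec, e2']
  have s4' : C * demazure a c (rename (Equiv.swap a b) f) =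
      rename (Equiv.swap a b) f - rename (⇑(Equiv.swap a c * Equiv.swap a b)) f := by
    rw [hC, demazure_spec, rename_perm_mul]
  have e3' : rename (Equiv.swap b c) (demazure a b (demazure b c f)) =
      - demazure a c (demazure b c (rename (Equiv.swap b c) f)) := by
    rw [rename_demazure (Equiv.swap b c) hab,
      Equiv.swap_apply_of_ne_of_ne hab hac, Equiv.swap_apply_left,
      rename_demazure (Equiv.swap b c) hbc, Equiv.swap_apply_left, Equiv.swap_apply_right,
      demazure_antisymm b c hbc, demazure_neg _ _ hac]
  have s3' : B * demazure b c (demazure a b (demazure b c f)) =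
      demazure a b (demazure b c f) + demazure a c (demazure b c (rename (Equiv.swap b c) f)) := by
    rw [hB, demazure_spec, e3']; ring
  have s5' : B * demazure b c (rename (Equiv.swap b c) f) = rename (Equiv.swap b c) f - f := by
    rw [hB, demazure_spec, rename_perm_mul, Equiv.swap_mul_self, rename_perm_one]
  have e6' : rename (Equiv.swap a c) (demazure b c (rename (Equiv.swap b c) f)) =
      - demazure a b (rename (⇑(Equiv.swap a c * Equiv.swap b c)) f) := by
    rw [rename_demazure (Equiv.swap a c) hbc,
      Equiv.swap_apply_of_ne_of_ne hab.symm hbc, Equiv.swap_apply_right, rename_perm_mul,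
      demazure_antisymm a b hab]
  have s6' : C * demazure a c (demazure b c (rename (Equiv.swap b c) f)) =
      demazure b c (rename (Equiv.swap b c) f)
        + demazure a b (rename (⇑(Equiv.swap a c * Equiv.swap b c)) f) := by
    rw [hC, demazure_spec, e6']; ring
  have s7' : A * demazure a b (rename (⇑(Equiv.swap a c * Equiv.swap b c)) f) =
      rename (⇑(Equiv.swap a c * Equiv.swap b c)) f - rename (Equiv.swap a c) f := by
    rw [hA, demazure_spec, rename_perm_mul, swap3_right hab hac hbc]
  linear_combination (A*B^2*C^2) * s3 + (A*B*C^2) * s2 - (A*B*C) * s4 + (B*C^2) * s1 +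
    (A*B^2*C) * s6 + (B^2*C) * s5 + (A*B*C) * s7 -
    ((A^2*B*C^2) * s3' + (A*B*C^2) * s2' - (A*B*C) * s4' + (A*C^2) * s1' +
     (A^2*B*C) * s6' + (A^2*C) * s5' + (A*B*C) * s7')

/-! ### Length combinatorics -/

lemma swap_lt_swap_iff {n i : ℕ} (h : i + 1 < n) {u v : Fin n} (huv : u ≠ v) :
    (Equiv.swap ⟨i, Nat.lt_of_succ_lt h⟩ ⟨i + 1, h⟩) v
      < (Equiv.swap ⟨i, Nat.lt_of_succ_lt h⟩ ⟨i + 1, h⟩) u ↔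
    ((u = ⟨i, Nat.lt_of_succ_lt h⟩ ∧ v = ⟨i + 1, h⟩) ∨
      (v < u ∧ ¬(u = ⟨i + 1, h⟩ ∧ v = ⟨i, Nat.lt_of_succ_lt h⟩))) := by
  simp only [Equiv.swap_apply_def]
  split_ifs <;>
    (simp only [Fin.lt_def, Fin.ext_iff, Fin.val_mk, ne_eq, not_and, not_or] at * ; omega)

lemma permLen_swap_mul_of_lt {n i : ℕ} (h : i + 1 < n) (w : Equiv.Perm (Fin n))
    (hw : w⁻¹ ⟨i, Nat.lt_of_succ_lt h⟩ < w⁻¹ ⟨i + 1, h⟩) :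
    permLen (Equiv.swap ⟨i, Nat.lt_of_succ_lt h⟩ ⟨i + 1, h⟩ * w) = permLen w + 1 := by
  have key : (Finset.univ.filter
        (fun p : Fin n × Fin n => p.1 < p.2 ∧
          (Equiv.swap (⟨i, Nat.lt_of_succ_lt h⟩ : Fin n) (⟨i + 1, h⟩ : Fin n) * w) p.2
            < (Equiv.swap (⟨i, Nat.lt_of_succ_lt h⟩ : Fin n) (⟨i + 1, h⟩ : Fin n) * w) p.1)) =
      insert (w⁻¹ ⟨i, Nat.lt_of_succ_lt h⟩, w⁻¹ ⟨i + 1, h⟩)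
        (Finset.univ.filter (fun p : Fin n × Fin n => p.1 < p.2 ∧ w p.2 < w p.1)) := by
    ext ⟨p, q⟩
    simp only [Finset.mem_filter, Finset.mem_insert, Finset.mem_univ, true_and,
      Prod.mk.injEq]
    simp only [Equiv.Perm.mul_apply]
    constructor
    · rintro ⟨hpq, hlt⟩
      rcases (swap_lt_swap_iff h (w.injective.ne hpq.ne)).mp hlt with ⟨h1, h2⟩ | ⟨h1, _⟩
      · left
        constructor
        · rw [← h1, Equiv.Perm.inv_def, Equiv.symm_apply_apply]
        · rw [← h2, Equiv.Perm.inv_def, Equiv.symm_apply_apply]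
      · right; exact ⟨hpq, h1⟩
    · rintro (⟨rfl, rfl⟩ | ⟨hpq, hlt⟩)
      · refine ⟨hw, ?_⟩
        rw [Equiv.Perm.inv_def, Equiv.apply_symm_apply, Equiv.apply_symm_apply,
          Equiv.swap_apply_left, Equiv.swap_apply_right]
        exact Fin.mk_lt_mk.mpr (Nat.lt_succ_self i)
      · refine ⟨hpq, ?_⟩
        apply (swap_lt_swap_iff h (w.injective.ne hpq.ne)).mpr
        right
        refine ⟨hlt, ?_⟩
        rintro ⟨h1, h2⟩
        have hp : p = w⁻¹ ⟨i + 1, h⟩ := by rw [← h1, Equiv.Perm.inv_def, Equiv.symm_apply_apply]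
        have hq : q = w⁻¹ ⟨i, Nat.lt_of_succ_lt h⟩ := by rw [← h2, Equiv.Perm.inv_def, Equiv.symm_apply_apply]
        rw [hp, hq] at hpq
        exact absurd hw (lt_asymm hpq)
  rw [permLen, permLen, key, Finset.card_insert_of_notMem]
  simp only [Finset.mem_filter, Finset.mem_univ, true_and, not_and,
    Equiv.Perm.inv_def, Equiv.apply_symm_apply]
  intro _
  exact fun hlt => absurd hlt (by simp [Fin.lt_def])

lemma permLen_swap_mul_of_gt {n i : ℕ} (h : i + 1 < n) (w : Equiv.Perm (Fin n))
    (hw : w⁻¹ ⟨i + 1, h⟩ < w⁻¹ ⟨i, Nat.lt_of_succ_lt h⟩) :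
    permLen w = permLen (Equiv.swap ⟨i, Nat.lt_of_succ_lt h⟩ ⟨i + 1, h⟩ * w) + 1 := by
  set ii : Fin n := ⟨i, Nat.lt_of_succ_lt h⟩ with hii
  set jj : Fin n := ⟨i + 1, h⟩ with hjj
  have h2 : (Equiv.swap ii jj * w)⁻¹ ii < (Equiv.swap ii jj * w)⁻¹ jj := by
    rw [mul_inv_rev, Equiv.swap_inv, Equiv.Perm.mul_apply, Equiv.Perm.mul_apply,
      Equiv.swap_apply_left, Equiv.swap_apply_right]
    exact hw
  have := permLen_swap_mul_of_lt h (Equiv.swap ii jj * w) h2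
  rwa [← mul_assoc, Equiv.swap_mul_self, one_mul] at this

lemma permLen_one {n : ℕ} : permLen (1 : Equiv.Perm (Fin n)) = 0 := by
  rw [permLen, Finset.card_eq_zero, Finset.filter_eq_empty_iff]
  rintro ⟨p, q⟩ _
  simp only [Equiv.Perm.one_apply]
  rintro ⟨h1, h2⟩
  exact absurd h1 (lt_asymm h2)

lemma strictMono_perm_eq_one {n : ℕ} {w : Equiv.Perm (Fin n)} (hmono : StrictMono ⇑w) :
    w = 1 := by
  have hid : ⇑w = id :=
    (@StrictMono.range_inj (Fin n) (Fin n) _ _ (inferInstance : WellFoundedLT (Fin n)) _ _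
      hmono strictMono_id).mp (by rw [w.surjective.range_eq, Set.range_id])
  ext x
  rw [show w x = (⇑w) x from rfl, hid]
  simp

lemma permLen_eq_zero {n : ℕ} {w : Equiv.Perm (Fin n)} (hw : permLen w = 0) : w = 1 := by
  rw [permLen, Finset.card_eq_zero, Finset.filter_eq_empty_iff] at hw
  apply strictMono_perm_eq_one
  intro p q hpq
  have h1 : ¬(p < q ∧ w q < w p) := by simpa using hw (Finset.mem_univ (p, q))
  have hle : w p ≤ w q := le_of_not_gt (fun hh => h1 ⟨hpq, hh⟩)
  exact lt_of_le_of_ne hle (w.injective.ne hpq.ne)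

lemma exists_descent {n : ℕ} {w : Equiv.Perm (Fin n)} (hw : w ≠ 1) :
    ∃ i, ∃ h : i + 1 < n, w⁻¹ ⟨i + 1, h⟩ < w⁻¹ ⟨i, Nat.lt_of_succ_lt h⟩ := by
  by_contra hcon
  push_neg at hcon
  have step : ∀ i (h : i + 1 < n),
      w⁻¹ ⟨i, Nat.lt_of_succ_lt h⟩ < w⁻¹ ⟨i + 1, h⟩ := by
    intro i h
    rcases lt_trichotomy (w⁻¹ ⟨i, Nat.lt_of_succ_lt h⟩) (w⁻¹ ⟨i + 1, h⟩) with h1 | h1 | h1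
    · exact h1
    · exact absurd (w⁻¹.injective h1) (by simp [Fin.ext_iff])
    · exact absurd h1 (not_lt.mpr (hcon i h))
  have key : ∀ m : ℕ, ∀ hm : m < n, ∀ p : Fin n, p < ⟨m, hm⟩ → w⁻¹ p < w⁻¹ ⟨m, hm⟩ := by
    intro m
    induction m with
    | zero => exact fun hm p hp => absurd hp (by simp [Fin.lt_def])
    | succ k ih =>
      intro hm p hp
      have hk : k < n := Nat.lt_of_succ_lt hm
      have hstep : w⁻¹ ⟨k, hk⟩ < w⁻¹ ⟨k + 1, hm⟩ := step k hm
      rcases Nat.lt_or_ge p.val k with h1 | h1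
      · exact lt_trans (ih hk p (by simp only [Fin.lt_def, Fin.val_mk]; omega)) hstep
      · have hpk : p = ⟨k, hk⟩ := by
          simp only [Fin.lt_def, Fin.val_mk] at hp
          exact Fin.ext (by simp only [Fin.val_mk]; omega)
        rw [hpk]; exact hstep
  have hmono : StrictMono ⇑(w⁻¹) := by
    intro p q hpq
    have := key q.val q.isLt p (by rwa [Fin.eta])
    rwa [Fin.eta] at this
  have : w⁻¹ = 1 := strictMono_perm_eq_one hmono
  exact hw (by rw [← inv_inv w, this, inv_one])

lemma adjSwap_eq {n i : ℕ} (h : i + 1 < n) :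
    adjSwap n i = Equiv.swap ⟨i, Nat.lt_of_succ_lt h⟩ ⟨i + 1, h⟩ := dif_pos h

lemma permLen_adjSwap_mul {n i : ℕ} (h : i + 1 < n) (w : Equiv.Perm (Fin n)) :
    permLen (adjSwap n i * w) = permLen w + 1 ∨ permLen w = permLen (adjSwap n i * w) + 1 := by
  rw [adjSwap_eq h]
  rcases lt_trichotomy (w⁻¹ ⟨i, Nat.lt_of_succ_lt h⟩) (w⁻¹ ⟨i + 1, h⟩) with h1 | h1 | h1
  · exact Or.inl (permLen_swap_mul_of_lt h w h1)
  · exact absurd (w⁻¹.injective h1) (by simp [Fin.ext_iff])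
  · exact Or.inr (permLen_swap_mul_of_gt h w h1)

lemma permLen_prod_le {n : ℕ} (l : List ℕ) :
    permLen ((l.map (adjSwap n)).prod) ≤ l.length := by
  induction l with
  | nil => simp [permLen_one]
  | cons i t ih =>
    rw [List.map_cons, List.prod_cons, List.length_cons]
    by_cases h : i + 1 < n
    · rcases permLen_adjSwap_mul h ((t.map (adjSwap n)).prod) with h1 | h1 <;> omega
    · rw [adjSwap, dif_neg h, one_mul]; omega

lemma exists_reducedWord {n : ℕ} (w : Equiv.Perm (Fin n)) : ∃ l, IsReducedWord n w l := by
  generalize hk : permLen w = k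
  induction k using Nat.strong_induction_on generalizing w with
  | _ k ih =>
    rcases eq_or_ne w 1 with rfl | hw
    · exact ⟨[], fun i hi => absurd hi List.not_mem_nil, by simp, by simp [permLen_one]⟩
    · obtain ⟨i, h, hdesc⟩ := exists_descent hw
      have hdec := permLen_swap_mul_of_gt h w hdesc
      rw [← adjSwap_eq h] at hdec
      have hlt : permLen (adjSwap n i * w) < k := by omega
      obtain ⟨t, ht1, ht2, ht3⟩ := ih _ hlt (adjSwap n i * w) rfl
      refine ⟨i :: t, ?_, ?_, ?_⟩
      · intro j hj
        rcases List.mem_cons.mp hj with rfl | hj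
        · exact h
        · exact ht1 j hj
      · rw [List.map_cons, List.prod_cons, ht2, ← mul_assoc, adjSwap_eq h,
          Equiv.swap_mul_self, one_mul]
      · rw [List.length_cons, ht3]; omega

lemma reducedWord_cons {n : ℕ} {w : Equiv.Perm (Fin n)} {i : ℕ} {t : List ℕ}
    (hl : IsReducedWord n w (i :: t)) :
    (i + 1 < n) ∧ IsReducedWord n (adjSwap n i * w) t ∧
      permLen w = permLen (adjSwap n i * w) + 1 := by
  obtain ⟨h1, h2, h3⟩ := hl
  have hin : i + 1 < n := h1 i List.mem_cons_self
  rw [List.map_cons, List.prod_cons] at h2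
  have hprod : (t.map (adjSwap n)).prod = adjSwap n i * w := by
    rw [← h2, ← mul_assoc, adjSwap_eq hin, Equiv.swap_mul_self, one_mul]
  rw [List.length_cons] at h3
  have hle : permLen (adjSwap n i * w) ≤ t.length := by
    rw [← hprod]; exact permLen_prod_le t
  rcases permLen_adjSwap_mul hin w with hc | hc
  · omega
  · exact ⟨hin, ⟨fun j hj => h1 j (List.mem_cons_of_mem i hj), hprod, by omega⟩, hc⟩

lemma reducedWord_descent {n : ℕ} {w : Equiv.Perm (Fin n)} {i : ℕ} (h : i + 1 < n)
    (hdrop : permLen w = permLen (adjSwap n i * w) + 1) :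
    w⁻¹ ⟨i + 1, h⟩ < w⁻¹ ⟨i, Nat.lt_of_succ_lt h⟩ := by
  rcases lt_trichotomy (w⁻¹ ⟨i, Nat.lt_of_succ_lt h⟩) (w⁻¹ ⟨i + 1, h⟩) with h1 | h1 | h1
  · have := permLen_swap_mul_of_lt h w h1
    rw [← adjSwap_eq h] at this
    omega
  · exact absurd (w⁻¹.injective h1) (by simp [Fin.ext_iff])
  · exact h1

/-! ### demAt / demWord and independence -/

lemma demAt_eq {n i : ℕ} (h : i + 1 < n) :
    demAt n i = demazure ⟨i, Nat.lt_of_succ_lt h⟩ ⟨i + 1, h⟩ := dif_pos h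

lemma demWord_cons (n : ℕ) (i : ℕ) (t : List ℕ) :
    demWord n (i :: t) = demAt n i ∘ demWord n t := rfl

lemma mk_ne_mk {n a b : ℕ} (ha : a < n) (hb : b < n) (hab : a ≠ b) :
    (⟨a, ha⟩ : Fin n) ≠ ⟨b, hb⟩ := by simp [Fin.ext_iff]; exact hab

lemma adjSwap_apply_lo {n i : ℕ} (h : i + 1 < n) :
    adjSwap n i ⟨i, Nat.lt_of_succ_lt h⟩ = ⟨i + 1, h⟩ := by
  rw [adjSwap_eq h, Equiv.swap_apply_left]

lemma adjSwap_apply_hi {n i : ℕ} (h : i + 1 < n) :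
    adjSwap n i ⟨i + 1, h⟩ = ⟨i, Nat.lt_of_succ_lt h⟩ := by
  rw [adjSwap_eq h, Equiv.swap_apply_right]

lemma adjSwap_apply_other {n i : ℕ} (h : i + 1 < n) (x : Fin n)
    (h1 : x.val ≠ i) (h2 : x.val ≠ i + 1) : adjSwap n i x = x := by
  rw [adjSwap_eq h, Equiv.swap_apply_of_ne_of_ne]
  · exact fun hx => h1 (by rw [hx])
  · exact fun hx => h2 (by rw [hx])

lemma inv_adjSwap_mul {n i : ℕ} (h : i + 1 < n) (w : Equiv.Perm (Fin n)) (x : Fin n) :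
    (adjSwap n i * w)⁻¹ x = w⁻¹ (adjSwap n i x) := by
  rw [mul_inv_rev, Equiv.Perm.mul_apply, adjSwap_eq h, Equiv.swap_inv]

lemma adjSwap_mul_self {n i : ℕ} (h : i + 1 < n) : adjSwap n i * adjSwap n i = 1 := by
  rw [adjSwap_eq h, Equiv.swap_mul_self]

lemma adjSwap_comm {n i j : ℕ} (hi : i + 1 < n) (hj : j + 1 < n) (hij : i + 1 < j) :
    adjSwap n i * adjSwap n j = adjSwap n j * adjSwap n i := by
  rw [adjSwap_eq hi, adjSwap_eq hj]
  exact (swap_disj_comm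
    (mk_ne_mk _ _ (by omega)) (mk_ne_mk _ _ (by omega))
    (mk_ne_mk _ _ (by omega)) (mk_ne_mk _ _ (by omega))).symm

lemma swap_braid {α : Type*} [DecidableEq α] {a b c : α} (hab : a ≠ b) (hac : a ≠ c)
    (hbc : b ≠ c) :
    Equiv.swap a b * (Equiv.swap b c * Equiv.swap a b) =
      Equiv.swap b c * (Equiv.swap a b * Equiv.swap b c) := by
  ext x
  rcases eq_or_ne x a with rfl | hxa
  · simp [Equiv.swap_apply_of_ne_of_ne, hab, hac, hbc, hab.symm, hac.symm, hbc.symm]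
  rcases eq_or_ne x b with rfl | hxb
  · simp [Equiv.swap_apply_of_ne_of_ne, hab, hac, hbc, hab.symm, hac.symm, hbc.symm]
  rcases eq_or_ne x c with rfl | hxc
  · simp [Equiv.swap_apply_of_ne_of_ne, hab, hac, hbc, hab.symm, hac.symm, hbc.symm]
  · simp [Equiv.swap_apply_of_ne_of_ne, hxa, hxb, hxc]

lemma adjSwap_braid {n i : ℕ} (h2 : i + 2 < n) :
    adjSwap n i * (adjSwap n (i + 1) * adjSwap n i) =
      adjSwap n (i + 1) * (adjSwap n i * adjSwap n (i + 1)) := by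
  have h1 : i + 1 < n := Nat.lt_of_succ_lt h2
  rw [adjSwap_eq h1, adjSwap_eq h2]
  have e : (⟨i + 1 + 1, h2⟩ : Fin n) = ⟨i + 2, h2⟩ := rfl
  exact swap_braid (mk_ne_mk _ _ (by omega)) (mk_ne_mk _ _ (by omega))
    (mk_ne_mk _ _ (by omega))

lemma demAt_comm {n i j : ℕ} (hi : i + 1 < n) (hj : j + 1 < n) (hij : i + 1 < j) :
    ∀ x, demAt n i (demAt n j x) = demAt n j (demAt n i x) := by
  intro x
  rw [demAt_eq hi, demAt_eq hj]
  exact demazure_comm (mk_ne_mk _ _ (by omega)) (mk_ne_mk _ _ (by omega))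
    (mk_ne_mk _ _ (by omega)) (mk_ne_mk _ _ (by omega)) (mk_ne_mk _ _ (by omega))
    (mk_ne_mk _ _ (by omega)) x

lemma demAt_braid {n i : ℕ} (h2 : i + 2 < n) :
    ∀ x, demAt n i (demAt n (i + 1) (demAt n i x)) =
      demAt n (i + 1) (demAt n i (demAt n (i + 1) x)) := by
  intro x
  have h1 : i + 1 < n := Nat.lt_of_succ_lt h2
  rw [demAt_eq h1, demAt_eq h2]
  have := demazure_braid (a := (⟨i, Nat.lt_of_succ_lt h1⟩ : Fin n))
    (b := ⟨i + 1, h1⟩) (c := ⟨i + 2, h2⟩)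
    (mk_ne_mk _ _ (by omega)) (mk_ne_mk _ _ (by omega)) (mk_ne_mk _ _ (by omega)) x
  convert this using 3

lemma demWord_indep_aux {n k : ℕ}
    (ih : ∀ m, m < k → ∀ w : Equiv.Perm (Fin n), permLen w = m →
      ∀ l l', IsReducedWord n w l → IsReducedWord n w l' → demWord n l = demWord n l')
    (w : Equiv.Perm (Fin n)) (hw : permLen w = k) (i j : ℕ) (t t' : List ℕ)
    (hl : IsReducedWord n w (i :: t)) (hl' : IsReducedWord n w (j :: t'))
    (hij : i < j) : demWord n (i :: t) = demWord n (j :: t') := by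
  obtain ⟨hi, ht, hdi⟩ := reducedWord_cons hl
  obtain ⟨hj, ht', hdj⟩ := reducedWord_cons hl'
  have hdesci := reducedWord_descent hi hdi
  have hdescj := reducedWord_descent hj hdj
  rcases Nat.lt_or_ge (i + 1) j with hgap | hgap
  · -- commuting case
    have hdj2 : (adjSwap n i * w)⁻¹ ⟨j + 1, hj⟩ <
        (adjSwap n i * w)⁻¹ ⟨j, Nat.lt_of_succ_lt hj⟩ := by
      rw [inv_adjSwap_mul hi, inv_adjSwap_mul hi,
        adjSwap_apply_other hi _ (by simp only [Fin.val_mk]; omega) (by simp only [Fin.val_mk]; omega),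
        adjSwap_apply_other hi _ (by simp only [Fin.val_mk]; omega) (by simp only [Fin.val_mk]; omega)]
      exact hdescj
    have hdi2 : (adjSwap n j * w)⁻¹ ⟨i + 1, hi⟩ <
        (adjSwap n j * w)⁻¹ ⟨i, Nat.lt_of_succ_lt hi⟩ := by
      rw [inv_adjSwap_mul hj, inv_adjSwap_mul hj,
        adjSwap_apply_other hj _ (by simp only [Fin.val_mk]; omega) (by simp only [Fin.val_mk]; omega),
        adjSwap_apply_other hj _ (by simp only [Fin.val_mk]; omega) (by simp only [Fin.val_mk]; omega)]
      exact hdesci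
    have hlen2 : permLen (adjSwap n i * w) = permLen (adjSwap n j * (adjSwap n i * w)) + 1 := by
      have := permLen_swap_mul_of_gt hj (adjSwap n i * w) hdj2
      rwa [← adjSwap_eq hj] at this
    have hlen2' : permLen (adjSwap n j * w) = permLen (adjSwap n i * (adjSwap n j * w)) + 1 := by
      have := permLen_swap_mul_of_gt hi (adjSwap n j * w) hdi2
      rwa [← adjSwap_eq hi] at this
    have hcomm : adjSwap n i * (adjSwap n j * w) = adjSwap n j * (adjSwap n i * w) := by
      rw [← mul_assoc, ← mul_assoc, adjSwap_comm hi hj hgap]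
    obtain ⟨m, hm1, hm2, hm3⟩ := exists_reducedWord (adjSwap n j * (adjSwap n i * w))
    have hjm : IsReducedWord n (adjSwap n i * w) (j :: m) := by
      refine ⟨?_, ?_, ?_⟩
      · intro x hx
        rcases List.mem_cons.mp hx with rfl | hx
        · exact hj
        · exact hm1 x hx
      · rw [List.map_cons, List.prod_cons, hm2, ← mul_assoc, adjSwap_mul_self hj, one_mul]
      · rw [List.length_cons, hm3]; omega
    have him : IsReducedWord n (adjSwap n j * w) (i :: m) := by
      refine ⟨?_, ?_, ?_⟩
      · intro x hx
        rcases List.mem_cons.mp hx with rfl | hx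
        · exact hi
        · exact hm1 x hx
      · rw [List.map_cons, List.prod_cons, hm2, ← hcomm, ← mul_assoc,
          adjSwap_mul_self hi, one_mul]
      · rw [hcomm] at hlen2'
        rw [List.length_cons, hm3]; omega
    have e1 : demWord n t = demWord n (j :: m) :=
      ih _ (by omega) _ rfl t (j :: m) ht hjm
    have e2 : demWord n t' = demWord n (i :: m) :=
      ih _ (by omega) _ rfl t' (i :: m) ht' him
    rw [demWord_cons, demWord_cons, e1, e2, demWord_cons, demWord_cons]
    funext x
    exact demAt_comm hi hj hgap (demWord n m x)
  · -- braid case : j = i + 1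
    have hji : j = i + 1 := by omega
    subst hji
    have h2 : i + 2 < n := hj
    -- descent of adjSwap n i * w at i+1
    have hd1 : (adjSwap n i * w)⁻¹ ⟨i + 1 + 1, hj⟩ <
        (adjSwap n i * w)⁻¹ ⟨i + 1, Nat.lt_of_succ_lt hj⟩ := by
      rw [inv_adjSwap_mul hi, inv_adjSwap_mul hi,
        adjSwap_apply_other hi _ (by simp only [Fin.val_mk]; omega) (by simp only [Fin.val_mk]; omega),
        show (⟨i + 1, Nat.lt_of_succ_lt hj⟩ : Fin n) = ⟨i + 1, hi⟩ from rfl,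
        adjSwap_apply_hi hi]
      exact lt_trans hdescj hdesci
    have hlen1 : permLen (adjSwap n i * w) =
        permLen (adjSwap n (i + 1) * (adjSwap n i * w)) + 1 := by
      have := permLen_swap_mul_of_gt hj (adjSwap n i * w) hd1
      rwa [← adjSwap_eq hj] at this
    -- descent of adjSwap n (i+1) * (adjSwap n i * w) at i
    have hd2 : (adjSwap n (i + 1) * (adjSwap n i * w))⁻¹ ⟨i + 1, hi⟩ <
        (adjSwap n (i + 1) * (adjSwap n i * w))⁻¹ ⟨i, Nat.lt_of_succ_lt hi⟩ := by
      rw [inv_adjSwap_mul hj, inv_adjSwap_mul hj, inv_adjSwap_mul hi, inv_adjSwap_mul hi,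
        show (⟨i + 1, hi⟩ : Fin n) = ⟨i + 1, Nat.lt_of_succ_lt hj⟩ from rfl,
        adjSwap_apply_lo hj,
        show adjSwap n (i + 1) ⟨i, Nat.lt_of_succ_lt hi⟩ = ⟨i, Nat.lt_of_succ_lt hi⟩ from
          adjSwap_apply_other hj _ (by simp only [Fin.val_mk]; omega) (by simp only [Fin.val_mk]; omega),
        show adjSwap n i ⟨i + 1 + 1, hj⟩ = ⟨i + 1 + 1, hj⟩ from
          adjSwap_apply_other hi _ (by simp only [Fin.val_mk]; omega) (by simp only [Fin.val_mk]; omega),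
        show (⟨i, Nat.lt_of_succ_lt hi⟩ : Fin n) = ⟨i, Nat.lt_of_succ_lt (Nat.lt_of_succ_lt h2)⟩
          from rfl,
        adjSwap_apply_lo hi]
      exact hdescj
    have hlen2 : permLen (adjSwap n (i + 1) * (adjSwap n i * w)) =
        permLen (adjSwap n i * (adjSwap n (i + 1) * (adjSwap n i * w))) + 1 := by
      have := permLen_swap_mul_of_gt hi (adjSwap n (i + 1) * (adjSwap n i * w)) hd2
      rwa [← adjSwap_eq hi] at this
    -- other branch descents
    have hd1' : (adjSwap n (i + 1) * w)⁻¹ ⟨i + 1, hi⟩ <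
        (adjSwap n (i + 1) * w)⁻¹ ⟨i, Nat.lt_of_succ_lt hi⟩ := by
      rw [inv_adjSwap_mul hj, inv_adjSwap_mul hj,
        show (⟨i + 1, hi⟩ : Fin n) = ⟨i + 1, Nat.lt_of_succ_lt hj⟩ from rfl,
        adjSwap_apply_lo hj,
        show adjSwap n (i + 1) ⟨i, Nat.lt_of_succ_lt hi⟩ = ⟨i, Nat.lt_of_succ_lt hi⟩ from
          adjSwap_apply_other hj _ (by simp only [Fin.val_mk]; omega) (by simp only [Fin.val_mk]; omega)]
      exact lt_trans hdescj hdesci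
    have hlen1' : permLen (adjSwap n (i + 1) * w) =
        permLen (adjSwap n i * (adjSwap n (i + 1) * w)) + 1 := by
      have := permLen_swap_mul_of_gt hi (adjSwap n (i + 1) * w) hd1'
      rwa [← adjSwap_eq hi] at this
    have hd2' : (adjSwap n i * (adjSwap n (i + 1) * w))⁻¹ ⟨i + 1 + 1, hj⟩ <
        (adjSwap n i * (adjSwap n (i + 1) * w))⁻¹ ⟨i + 1, Nat.lt_of_succ_lt hj⟩ := by
      rw [inv_adjSwap_mul hi, inv_adjSwap_mul hi, inv_adjSwap_mul hj, inv_adjSwap_mul hj,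
        show adjSwap n i ⟨i + 1 + 1, hj⟩ = ⟨i + 1 + 1, hj⟩ from
          adjSwap_apply_other hi _ (by simp only [Fin.val_mk]; omega) (by simp only [Fin.val_mk]; omega),
        show (⟨i + 1, Nat.lt_of_succ_lt hj⟩ : Fin n) = ⟨i + 1, hi⟩ from rfl,
        adjSwap_apply_hi hi,
        show adjSwap n (i + 1) ⟨i + 1 + 1, hj⟩ = ⟨i + 1, Nat.lt_of_succ_lt hj⟩ from ?_,
        show adjSwap n (i + 1) ⟨i, Nat.lt_of_succ_lt hi⟩ = ⟨i, Nat.lt_of_succ_lt hi⟩ from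
          adjSwap_apply_other hj _ (by simp only [Fin.val_mk]; omega) (by simp only [Fin.val_mk]; omega)]
      · exact hdesci
      · exact adjSwap_apply_hi hj
    have hlen2' : permLen (adjSwap n i * (adjSwap n (i + 1) * w)) =
        permLen (adjSwap n (i + 1) * (adjSwap n i * (adjSwap n (i + 1) * w))) + 1 := by
      have := permLen_swap_mul_of_gt hj (adjSwap n i * (adjSwap n (i + 1) * w)) hd2'
      rwa [← adjSwap_eq hj] at this
    have hbraid : adjSwap n (i + 1) * (adjSwap n i * (adjSwap n (i + 1) * w)) =
        adjSwap n i * (adjSwap n (i + 1) * (adjSwap n i * w)) := by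
      rw [← mul_assoc, ← mul_assoc, ← mul_assoc, ← mul_assoc, mul_assoc (adjSwap n (i+1)),
        mul_assoc (adjSwap n i)]
      rw [adjSwap_braid h2]
    obtain ⟨m, hm1, hm2, hm3⟩ :=
      exists_reducedWord (adjSwap n i * (adjSwap n (i + 1) * (adjSwap n i * w)))
    have hjim : IsReducedWord n (adjSwap n i * w) ((i + 1) :: i :: m) := by
      refine ⟨?_, ?_, ?_⟩
      · intro x hx
        rcases List.mem_cons.mp hx with rfl | hx
        · exact hj
        rcases List.mem_cons.mp hx with rfl | hx
        · exact hi
        · exact hm1 x hx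
      · rw [List.map_cons, List.map_cons, List.prod_cons, List.prod_cons, hm2,
          ← mul_assoc (adjSwap n i) (adjSwap n i), adjSwap_mul_self hi, one_mul,
          ← mul_assoc, adjSwap_mul_self hj, one_mul]
      · simp only [List.length_cons, hm3]; omega
    have him : IsReducedWord n (adjSwap n (i + 1) * w) (i :: (i + 1) :: m) := by
      refine ⟨?_, ?_, ?_⟩
      · intro x hx
        rcases List.mem_cons.mp hx with rfl | hx
        · exact hi
        rcases List.mem_cons.mp hx with rfl | hx
        · exact hj
        · exact hm1 x hx
      · rw [List.map_cons, List.map_cons, List.prod_cons, List.prod_cons, hm2, ← hbraid,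
          ← mul_assoc (adjSwap n (i + 1)) (adjSwap n (i + 1)), adjSwap_mul_self hj, one_mul,
          ← mul_assoc, adjSwap_mul_self hi, one_mul]
      · rw [hbraid] at hlen2'
        simp only [List.length_cons, hm3]; omega
    have e1 : demWord n t = demWord n ((i + 1) :: i :: m) :=
      ih _ (by omega) _ rfl t _ ht hjim
    have e2 : demWord n t' = demWord n (i :: (i + 1) :: m) :=
      ih _ (by omega) _ rfl t' _ ht' him
    rw [demWord_cons, demWord_cons, e1, e2]
    rw [demWord_cons, demWord_cons, demWord_cons, demWord_cons]
    funext x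
    exact demAt_braid h2 (demWord n m x)

theorem demWord_indep {n : ℕ} (k : ℕ) : ∀ w : Equiv.Perm (Fin n), permLen w = k →
    ∀ l l', IsReducedWord n w l → IsReducedWord n w l' → demWord n l = demWord n l' := by
  induction k using Nat.strong_induction_on with
  | _ k ih =>
    intro w hw l l' hl hl'
    match l, l' with
    | [], l' =>
      have h0 : permLen w = 0 := by
        have := hl.2.2; simp at this; omega
      have : l'.length = 0 := by rw [hl'.2.2, h0]
      rw [List.length_eq_zero_iff] at this
      subst this; rfl
    | i :: t, [] =>
      have h0 : permLen w = 0 := by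
        have := hl'.2.2; simp at this; omega
      have := hl.2.2
      simp [h0] at this
    | i :: t, j :: t' =>
      rcases lt_trichotomy i j with hij | rfl | hij
      · exact demWord_indep_aux ih w hw i j t t' hl hl' hij
      · obtain ⟨hi, ht, hdi⟩ := reducedWord_cons hl
        obtain ⟨_, ht', _⟩ := reducedWord_cons hl'
        rw [demWord_cons, demWord_cons,
          ih _ (by omega) _ rfl t t' ht ht']
      · exact (demWord_indep_aux ih w hw j i t' t hl' hl hij).symm

/-! ### Conjugation by the longest element -/

lemma demazureOf_eq {n : ℕ} {w : Equiv.Perm (Fin n)} {l : List ℕ}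
    (hl : IsReducedWord n w l) : demazureOf n w = demWord n l := by
  rw [demazureOf, dif_pos ⟨l, hl⟩]
  exact demWord_indep (permLen w) w rfl _ l
    (Exists.choose_spec (⟨l, hl⟩ : ∃ l, IsReducedWord n w l)) hl

lemma w0_apply {n : ℕ} (x : Fin n) : w0 n x = x.rev := rfl

lemma w0_mul_self (n : ℕ) : w0 n * w0 n = 1 := by
  ext x
  simp [w0, Equiv.Perm.mul_apply, Fin.rev_rev]

lemma w0_inv (n : ℕ) : (w0 n)⁻¹ = w0 n := by
  rw [inv_eq_iff_mul_eq_one, w0_mul_self]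

lemma w0_mk {n i : ℕ} (h : i < n) : w0 n ⟨i, h⟩ = ⟨n - 1 - i, by omega⟩ := by
  rw [w0_apply]
  ext
  simp [Fin.val_rev]
  omega

lemma w0_conj_adjSwap {n i : ℕ} (h : i + 1 < n) :
    w0 n * adjSwap n i * w0 n = adjSwap n (n - 2 - i) := by
  have hφ : (n - 2 - i) + 1 < n := by omega
  rw [adjSwap_eq h, adjSwap_eq hφ]
  have conj := Equiv.swap_apply_apply (w0 n) (⟨i, Nat.lt_of_succ_lt h⟩ : Fin n) ⟨i + 1, h⟩
  rw [w0_inv] at conj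
  rw [← conj, w0_mk, w0_mk]
  rw [Equiv.swap_comm]
  congr 1 <;> ext <;> simp <;> omega

lemma permLen_w0_conj {n : ℕ} (v : Equiv.Perm (Fin n)) :
    permLen (w0 n * v * w0 n) = permLen v := by
  rw [permLen, permLen]
  apply Finset.card_bij' (fun p _ => (Fin.rev p.2, Fin.rev p.1))
    (fun p _ => (Fin.rev p.2, Fin.rev p.1)) <;>
    rintro ⟨p, q⟩ hm <;>
    first
      | (simp only [Finset.mem_filter, Finset.mem_univ, true_and, Equiv.Perm.mul_apply,
          w0_apply, Fin.rev_rev, Fin.rev_lt_rev] at hm ⊢; tauto)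
      | simp [Fin.rev_rev]

lemma demAt_smul {n : ℕ} (j : ℕ) (c : ℚ) (f : MvPolynomial (Fin n) ℚ) :
    demAt n j (c • f) = c • demAt n j f := by
  by_cases h : j + 1 < n
  · rw [demAt_eq h]
    exact demazure_smul _ _ c (mk_ne_mk _ _ (by omega)) f
  · rw [demAt, dif_neg h]
    simp

lemma demAt_conj {n i : ℕ} (h : i + 1 < n) (f : MvPolynomial (Fin n) ℚ) :
    demAt n (n - 2 - i) (rename (w0 n) f) = - rename (w0 n) (demAt n i f) := by
  have hφ : (n - 2 - i) + 1 < n := by omega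
  rw [demAt_eq h, demAt_eq hφ]
  rw [rename_demazure (w0 n) (mk_ne_mk _ _ (by omega)) f, w0_mk, w0_mk]
  rw [show (⟨n - 1 - i, by omega⟩ : Fin n) = ⟨(n - 2 - i) + 1, hφ⟩ from by ext; simp; omega,
    show (⟨n - 1 - (i + 1), by omega⟩ : Fin n) = ⟨n - 2 - i, by omega⟩ from by ext; simp; omega]
  rw [demazure_antisymm _ _ (mk_ne_mk _ _ (by omega))]

lemma demWord_conj {n : ℕ} (l : List ℕ) (hl : ∀ i ∈ l, i + 1 < n)
    (f : MvPolynomial (Fin n) ℚ) :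
    demWord n (l.map (fun i => n - 2 - i)) (rename (w0 n) f) =
      ((-1 : ℚ) ^ l.length) • rename (w0 n) (demWord n l f) := by
  induction l with
  | nil => simp [demWord]
  | cons i t ih =>
    have hi : i + 1 < n := hl i List.mem_cons_self
    have ht : ∀ x ∈ t, x + 1 < n := fun x hx => hl x (List.mem_cons_of_mem i hx)
    rw [List.map_cons, demWord_cons, Function.comp_apply, ih ht, demAt_smul,
      demAt_conj hi, demWord_cons, List.length_cons, pow_succ]
    rw [smul_neg, Function.comp_apply]
    rw [mul_comm, mul_smul]
    simp

lemma prod_map_conj {n : ℕ} (l : List ℕ) (hl : ∀ i ∈ l, i + 1 < n) :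
    ((l.map (fun i => n - 2 - i)).map (adjSwap n)).prod =
      w0 n * (l.map (adjSwap n)).prod * w0 n := by
  induction l with
  | nil => simp [w0_mul_self]
  | cons i t ih =>
    have hi : i + 1 < n := hl i List.mem_cons_self
    have ht : ∀ x ∈ t, x + 1 < n := fun x hx => hl x (List.mem_cons_of_mem i hx)
    rw [List.map_cons, List.map_cons, List.prod_cons, List.map_cons, List.prod_cons,
      ih ht, ← w0_conj_adjSwap hi]
    have h1 := w0_mul_self n
    calc w0 n * adjSwap n i * w0 n * (w0 n * (t.map (adjSwap n)).prod * w0 n)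
        = w0 n * adjSwap n i * (w0 n * w0 n) * (t.map (adjSwap n)).prod * w0 n := by
          group
      _ = w0 n * (adjSwap n i * (t.map (adjSwap n)).prod) * w0 n := by
          rw [h1]; group

lemma reducedWord_conj {n : ℕ} {v : Equiv.Perm (Fin n)} {l : List ℕ}
    (hl : IsReducedWord n v l) :
    IsReducedWord n (w0 n * v * w0 n) (l.map (fun i => n - 2 - i)) := by
  obtain ⟨h1, h2, h3⟩ := hl
  refine ⟨?_, ?_, ?_⟩
  · intro x hx
    obtain ⟨y, hy, rfl⟩ := List.mem_map.mp hx
    have := h1 y hy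
    omega
  · rw [prod_map_conj l h1, h2]
  · rw [List.length_map, h3, permLen_w0_conj]


/-- Conjugating `(-1)^{ℓ(v)} ∂_v` by the action of the longest element `w₀` gives
`∂_{w₀ v w₀}`: for every `f`, `∂_{w₀ v w₀}(w₀·f) = (-1)^{ℓ(v)} · w₀·(∂_v f)`. -/
theorem demazure_conj_w0 (n : ℕ) (hn : 1 ≤ n) (v : Equiv.Perm (Fin n))
    (f : MvPolynomial (Fin n) ℚ) :
    demazureOf n (w0 n * v * w0 n) (rename (w0 n) f) =
      ((-1 : ℚ) ^ permLen v) • rename (w0 n) (demazureOf n v f) := by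
  obtain ⟨l, hl⟩ := exists_reducedWord v
  rw [demazureOf_eq (reducedWord_conj hl), demazureOf_eq hl,
    demWord_conj l hl.1 f, hl.2.2]
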